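/- arXiv:2004.03038 — 2 statements merged into one kernel-verified Lean document; each statement's English description precedes it below -/
import Mathlib

section
/- With θ(D_i) = arcsin(√3·D_i/(2D)) − π/3 for D_i ∈ (D, 2D/√3], the exact feasible area A(D_i) = 3D(D_i·sin θ(D_i) − D·θ(D_i)) satisfies lim_{D_i → D⁺} A(D_i)/(D_i − D)² = 3√3. -/
open Filter Topology

theorem area_asymptotic (D : ℝ) (hD : 0 < D) :
    Tendsto (fun Di =>
        (3 * D * (Di * Real.sin (Real.arcsin (Real.sqrt 3 * Di / (2 * D)) - Real.pi / 3)
            - D * (Real.arcsin (Real.sqrt 3 * Di / (2 * D)) - Real.pi / 3)))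
          / (Di - D) ^ 2)
      (𝓝[>] D) (𝓝 (3 * Real.sqrt 3)) := by
  have hs3 : Real.sqrt 3 ^ 2 = 3 := Real.sq_sqrt (by norm_num)
  have hs3nn : (0:ℝ) ≤ Real.sqrt 3 := Real.sqrt_nonneg 3
  have hs3lt : Real.sqrt 3 < 2 := by nlinarith
  have hs3gt : 1 < Real.sqrt 3 := by nlinarith
  set θ : ℝ → ℝ := fun x => Real.arcsin (Real.sqrt 3 * x / (2 * D)) - Real.pi / 3 with hθdef
  have huD : Real.sqrt 3 * D / (2 * D) = Real.sqrt 3 / 2 := by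
    field_simp
  have harc : Real.arcsin (Real.sqrt 3 / 2) = Real.pi / 3 := by
    rw [← Real.sin_pi_div_three]
    exact Real.arcsin_sin (by linarith [Real.pi_pos]) (by linarith [Real.pi_pos])
  have hθD : θ D = 0 := by
    simp only [hθdef, huD, harc, sub_self]
  -- derivative of θ at D
  have hu : HasDerivAt (fun x : ℝ => Real.sqrt 3 * x / (2 * D)) (Real.sqrt 3 / (2 * D)) D := by
    simpa using ((hasDerivAt_id D).const_mul (Real.sqrt 3)).div_const (2 * D)
  have harc' : HasDerivAt Real.arcsin 2 (Real.sqrt 3 / 2) := by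
    have h1 : Real.sqrt 3 / 2 ≠ -1 := by nlinarith
    have h2 : Real.sqrt 3 / 2 ≠ 1 := by
      intro h; nlinarith
    have := Real.hasDerivAt_arcsin h1 h2
    have hval : 1 - (Real.sqrt 3 / 2) ^ 2 = (1/2 : ℝ)^2 := by
      field_simp; nlinarith
    rwa [hval, Real.sqrt_sq (by norm_num), show (1:ℝ)/(1/2) = 2 by norm_num] at this
  have harc2 : HasDerivAt Real.arcsin 2 (Real.sqrt 3 * D / (2 * D)) := by
    rw [huD]; exact harc'
  have hderivθ : HasDerivAt θ (Real.sqrt 3 / D) D := by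
    have hcomp := (harc2.comp D hu).sub_const (Real.pi / 3)
    have h2 : 2 * (Real.sqrt 3 / (2 * D)) = Real.sqrt 3 / D := by
      field_simp [hD.ne']
    simpa [hθdef, Function.comp, h2] using hcomp
  have hmono : 𝓝[>] D ≤ 𝓝[≠] D :=
    nhdsWithin_mono D fun x hx => ne_of_gt hx
  -- slope limits
  have hsinθ : HasDerivAt (fun x => Real.sin (θ x)) (Real.sqrt 3 / D) D := by
    have := (Real.hasDerivAt_sin (θ D)).comp D hderivθ
    rw [hθD] at this
    simpa [Function.comp_def] using this
  have hslope_sin : Tendsto (fun x => Real.sin (θ x) / (x - D)) (𝓝[>] D)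
      (𝓝 (Real.sqrt 3 / D)) := by
    have h := (hasDerivAt_iff_tendsto_slope.mp hsinθ).mono_left hmono
    refine h.congr fun x => ?_
    simp [slope_def_field, hθD]
  have hslope_θ : Tendsto (fun x => θ x / (x - D)) (𝓝[>] D) (𝓝 (Real.sqrt 3 / D)) := by
    have h := (hasDerivAt_iff_tendsto_slope.mp hderivθ).mono_left hmono
    refine h.congr fun x => ?_
    simp [slope_def_field, hθD]
  -- θ tends to 0
  have hθ0 : Tendsto θ (𝓝[>] D) (𝓝 0) := by
    have := (hderivθ.continuousAt.continuousWithinAt (s := Set.Ioi D)).tendsto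
    rwa [hθD] at this
  -- eventually θ > 0
  have hub : D < 2 * D / Real.sqrt 3 := by
    rw [lt_div_iff₀ (by linarith)]; nlinarith
  have hev_pos : ∀ᶠ x in 𝓝[>] D, 0 < θ x := by
    filter_upwards [Ioo_mem_nhdsGT hub] with x hx
    have hx1 : D < x := hx.1
    have hx2 : x < 2 * D / Real.sqrt 3 := hx.2
    have hmem1 : Real.sqrt 3 * D / (2 * D) ∈ Set.Icc (-1:ℝ) 1 := by
      rw [huD]; constructor <;> nlinarith
    have hmem2 : Real.sqrt 3 * x / (2 * D) ∈ Set.Icc (-1:ℝ) 1 := by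
      constructor
      · have : (0:ℝ) ≤ Real.sqrt 3 * x / (2 * D) :=
          div_nonneg (mul_nonneg hs3nn (by linarith)) (by linarith)
        linarith
      · rw [div_le_one (by linarith)]
        nlinarith [(lt_div_iff₀ (by linarith : (0:ℝ) < Real.sqrt 3)).mp hx2]
    have hlt : Real.sqrt 3 * D / (2 * D) < Real.sqrt 3 * x / (2 * D) := by
      have h2D : (0:ℝ) < 2 * D := by linarith
      rw [div_lt_div_iff₀ h2D h2D]
      exact mul_lt_mul_of_pos_right
        (mul_lt_mul_of_pos_left hx1 (by linarith : (0:ℝ) < Real.sqrt 3)) h2D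
    have := Real.strictMonoOn_arcsin hmem1 hmem2 hlt
    rw [huD, harc] at this
    have hgoal : θ x = Real.arcsin (Real.sqrt 3 * x / (2 * D)) - Real.pi / 3 := rfl
    rw [hgoal]
    linarith
  -- eventually θ ≤ 1
  have hev_le1 : ∀ᶠ x in 𝓝[>] D, θ x ≤ 1 := by
    filter_upwards [hθ0 (Iio_mem_nhds one_pos)] with x hx
    exact le_of_lt (by simpa using hx)
  have hev_ne : ∀ᶠ x in 𝓝[>] D, D < x := self_mem_nhdsWithin
  -- remainder term
  set R : ℝ → ℝ := fun x => (Real.sin (θ x) - θ x) / (x - D) ^ 2 with hRdef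
  have hR0 : Tendsto R (𝓝[>] D) (𝓝 0) := by
    have hlow : Tendsto (fun x => -((θ x / (x - D)) ^ 2 * θ x) / 4) (𝓝[>] D) (𝓝 0) := by
      have h : Tendsto (fun x => -((θ x / (x - D)) ^ 2 * θ x) / 4) (𝓝[>] D)
          (𝓝 (-((Real.sqrt 3 / D) ^ 2 * 0) / 4)) := (((hslope_θ.pow 2).mul hθ0).neg).div_const 4
      simpa using h
    refine tendsto_of_tendsto_of_tendsto_of_le_of_le' hlow tendsto_const_nhds ?_ ?_
    · filter_upwards [hev_pos, hev_le1, hev_ne] with x hp hl hne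
      have hs : (0:ℝ) < x - D := sub_pos.mpr hne
      have hd : (0:ℝ) < (x - D) ^ 2 := by positivity
      have hsin := Real.sin_gt_sub_cube hp
      have heq : -((θ x / (x - D)) ^ 2 * θ x) / 4 = (-(θ x ^ 3) / 4) / (x - D) ^ 2 := by
        field_simp
      simp only [hRdef]
      rw [heq, div_le_div_iff₀ hd hd]
      nlinarith [pow_pos hp 3]
    · filter_upwards [hev_pos, hev_ne] with x hp hne
      have hs : (0:ℝ) < x - D := sub_pos.mpr hne
      have hd : (0:ℝ) ≤ (x - D) ^ 2 := by positivity
      have := Real.sin_lt hp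
      simp only [hRdef]
      exact div_nonpos_of_nonpos_of_nonneg (by linarith) hd
  -- combine
  have hmain : Tendsto (fun x => 3 * D * (Real.sin (θ x) / (x - D)) + 3 * D ^ 2 * R x)
      (𝓝[>] D) (𝓝 (3 * Real.sqrt 3)) := by
    have h := ((hslope_sin.const_mul (3 * D)).add (hR0.const_mul (3 * D ^ 2)))
    have heq : 3 * D * (Real.sqrt 3 / D) + 3 * D ^ 2 * 0 = 3 * Real.sqrt 3 := by
      field_simp [hD.ne']; ring
    rwa [heq] at h
  refine hmain.congr' ?_
  filter_upwards [hev_ne] with x hx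
  have hxD : x - D ≠ 0 := by
    have := sub_pos.mpr hx; linarith
  simp only [hRdef, hθdef]
  field_simp
  ring
end

section
/- Restricting facilities in the BLP to binary assignment variables y_{ij} ∈ {0,1} yields the same optimal objective value as the mixed relaxation with y_{ij} ∈ [0,1]: the optimal values of the two programs are equal. -/
theorem MBLP_eq_BLP
    {ι κ : Type*} [Fintype ι] [Fintype κ]
    (w : ι → ℝ) (d : ι → κ → ℝ) (hw : ∀ i, 0 ≤ w i) (hd : ∀ i j, 0 ≤ d i j)
    (p : ℕ) (hp1 : 1 ≤ p) (hp2 : p ≤ Fintype.card κ) :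
    sInf {v : ℝ | ∃ x : κ → ℝ, ∃ y : ι → κ → ℝ,
        (∀ j, x j = 0 ∨ x j = 1) ∧ (∑ j, x j = p) ∧
        (∀ i j, 0 ≤ y i j) ∧ (∀ i j, y i j ≤ x j) ∧
        (∀ i, ∑ j, y i j = 1) ∧
        v = ∑ i, ∑ j, w i * d i j * y i j}
      = sInf {v : ℝ | ∃ x : κ → ℝ, ∃ y : ι → κ → ℝ,
        (∀ j, x j = 0 ∨ x j = 1) ∧ (∑ j, x j = p) ∧
        (∀ i j, y i j = 0 ∨ y i j = 1) ∧ (∀ i j, y i j ≤ x j) ∧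
        (∀ i, ∑ j, y i j = 1) ∧
        v = ∑ i, ∑ j, w i * d i j * y i j} := by
  classical
  set S₁ : Set ℝ := {v : ℝ | ∃ x : κ → ℝ, ∃ y : ι → κ → ℝ,
        (∀ j, x j = 0 ∨ x j = 1) ∧ (∑ j, x j = p) ∧
        (∀ i j, 0 ≤ y i j) ∧ (∀ i j, y i j ≤ x j) ∧
        (∀ i, ∑ j, y i j = 1) ∧
        v = ∑ i, ∑ j, w i * d i j * y i j} with hS₁
  set S₂ : Set ℝ := {v : ℝ | ∃ x : κ → ℝ, ∃ y : ι → κ → ℝ,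
        (∀ j, x j = 0 ∨ x j = 1) ∧ (∑ j, x j = p) ∧
        (∀ i j, y i j = 0 ∨ y i j = 1) ∧ (∀ i j, y i j ≤ x j) ∧
        (∀ i, ∑ j, y i j = 1) ∧
        v = ∑ i, ∑ j, w i * d i j * y i j} with hS₂
  -- S₂ ⊆ S₁
  have hsub : S₂ ⊆ S₁ := by
    rintro v ⟨x, y, hx, hxp, hy01, hyx, hy1, hv⟩
    exact ⟨x, y, hx, hxp, fun i j => by rcases hy01 i j with h | h <;> simp [h], hyx, hy1, hv⟩
  -- nonempty witness for S₂
  obtain ⟨T, -, hTcard⟩ := Finset.exists_subset_card_eq (s := (Finset.univ : Finset κ)) (n := p)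
    (by simpa using hp2)
  have hTne : T.Nonempty := Finset.card_pos.mp (by omega)
  obtain ⟨j₀, hj₀⟩ := hTne
  have hne₂ : S₂.Nonempty := by
    refine ⟨_, (fun j => if j ∈ T then 1 else 0), (fun _ j => if j = j₀ then 1 else 0),
      ?_, ?_, ?_, ?_, ?_, rfl⟩
    · intro j; by_cases h : j ∈ T <;> simp [h]
    · simp [Finset.sum_ite_mem, hTcard]
    · intro i j; by_cases h : j = j₀ <;> simp [h]
    · intro i j
      by_cases h : j = j₀
      · simp [h, hj₀]
      · simp only [h, if_false]
        split <;> norm_num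
    · intro i; simp
  have hne₁ : S₁.Nonempty := hne₂.mono hsub
  -- 0 is a lower bound for S₁
  have hbdd₁ : ∀ v ∈ S₁, (0:ℝ) ≤ v := by
    rintro v ⟨x, y, hx, hxp, hy0, hyx, hy1, rfl⟩
    refine Finset.sum_nonneg fun i _ => Finset.sum_nonneg fun j _ =>
      mul_nonneg (mul_nonneg (hw i) (hd i j)) (hy0 i j)
  have hbdd₂ : BddBelow S₂ := ⟨0, fun v hv => hbdd₁ v (hsub hv)⟩
  refine le_antisymm (csInf_le_csInf ⟨0, hbdd₁⟩ hne₂ hsub) ?_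
  -- sInf S₂ ≤ every element of S₁
  refine le_csInf hne₁ ?_
  rintro v ⟨x, y, hx, hxp, hy0, hyx, hy1, rfl⟩
  -- open facilities
  set F : Finset κ := Finset.univ.filter (fun j => x j = 1) with hF
  have hFne : F.Nonempty := by
    rw [Finset.filter_nonempty_iff]
    by_contra h
    push_neg at h
    have : ∑ j, x j = 0 := Finset.sum_eq_zero fun j _ => by
      rcases hx j with h0 | h1
      · exact h0
      · exact absurd h1 (h j (Finset.mem_univ j))
    rw [this] at hxp
    have : (p:ℝ) ≠ 0 := by positivity
    exact this hxp.symm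
  have hsel : ∀ i, ∃ j ∈ F, ∀ j' ∈ F, w i * d i j ≤ w i * d i j' := fun i =>
    Finset.exists_min_image F (fun j => w i * d i j) hFne
  choose g hg1 hg2 using hsel
  have hgx : ∀ i, x (g i) = 1 := fun i => (Finset.mem_filter.mp (hg1 i)).2
  -- the rounded solution
  have hmem : (∑ i, w i * d i (g i)) ∈ S₂ := by
    refine ⟨x, fun i j => if j = g i then 1 else 0, hx, hxp, ?_, ?_, ?_, ?_⟩
    · intro i j; by_cases h : j = g i <;> simp [h]
    · intro i j
      by_cases h : j = g i
      · subst h; simp [hgx i]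
      · simp only [h, if_false]
        rcases hx j with h' | h' <;> simp [h']
    · intro i; simp
    · refine Finset.sum_congr rfl fun i _ => ?_
      simp [mul_ite]
  refine le_trans (csInf_le hbdd₂ hmem) ?_
  refine Finset.sum_le_sum fun i _ => ?_
  calc w i * d i (g i) = ∑ j, w i * d i (g i) * y i j := by
        rw [← Finset.mul_sum, hy1 i, mul_one]
    _ ≤ ∑ j, w i * d i j * y i j := by
        refine Finset.sum_le_sum fun j _ => ?_
        rcases hx j with h0 | h1
        · have hz : y i j = 0 := le_antisymm (by rw [← h0]; exact hyx i j) (hy0 i j)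
          simp [hz]
        · have hjF : j ∈ F := Finset.mem_filter.mpr ⟨Finset.mem_univ j, h1⟩
          exact mul_le_mul_of_nonneg_right (hg2 i j hjF) (hy0 i j)
end
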